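/- State-dependent threshold structure of the optimal change detector (core of Theorem 2): let W(p,x) := lim_{k→∞} (B^k ψ)(p,x) be the pointwise limit of the Bellman iterates of ψ. Then for each x ∈ S there exists a unique p°(x) ∈ (0,1) such that λ(1−p°(x)) = p°(x) + Σ_{x'∈S} P(x'|p°(x),x)·W(Φ(x',x,p°(x)), x'); moreover, for every p ∈ [0,1], W(p,x) = λ(1−p) if and only if p ≥ p°(x). -/

import Mathlib

open Finset Filter Topology

noncomputable section

/-- `p̄ = p + ρ(1-p)`, the predicted change probability. -/
def pbar (ρ p : ℝ) : ℝ := p + ρ * (1 - p)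

/-- Likelihood ratio `L(x',x) = Q₂(x'|x) / Q₁(x'|x)`. -/
def likeRatio {S : Type*} (Q1 Q2 : S → S → ℝ) (x' x : S) : ℝ := Q2 x x' / Q1 x x'

/-- Bayesian posterior update `Φ(x',x,p)`. -/
def post {S : Type*} (Q1 Q2 : S → S → ℝ) (ρ : ℝ) (x' x : S) (p : ℝ) : ℝ :=
  pbar ρ p * likeRatio Q1 Q2 x' x / (pbar ρ p * likeRatio Q1 Q2 x' x + (1 - pbar ρ p))

/-- Predictive probability `P(x'|p,x)`. -/
def pred {S : Type*} (Q1 Q2 : S → S → ℝ) (ρ : ℝ) (x' : S) (p : ℝ) (x : S) : ℝ :=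
  (1 - pbar ρ p) * Q1 x x' + pbar ρ p * Q2 x x'

/-- The Bellman operator `B`. -/
def bell {S : Type*} [Fintype S] (Q1 Q2 : S → S → ℝ) (ρ lam : ℝ)
    (V : ℝ → S → ℝ) : ℝ → S → ℝ :=
  fun p x => min (lam * (1 - p))
    (p + ∑ x' : S, pred Q1 Q2 ρ x' p x * V (post Q1 Q2 ρ x' x p) x')

/-- The stopping cost `ψ(p,x) = λ(1-p)`. -/
def psi (S : Type*) (lam : ℝ) : ℝ → S → ℝ := fun p _ => lam * (1 - p)

lemma my_concaveOn_min {s : Set ℝ} (hs : Convex ℝ s) {f g : ℝ → ℝ}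
    (hf : ConcaveOn ℝ s f) (hg : ConcaveOn ℝ s g) :
    ConcaveOn ℝ s (fun x => min (f x) (g x)) := by
  refine ⟨hs, ?_⟩
  intro x hx y hy a b ha hb hab
  simp only [smul_eq_mul]
  refine le_min ?_ ?_
  · calc a * min (f x) (g x) + b * min (f y) (g y)
        ≤ a * f x + b * f y := by
          gcongr <;> [exact min_le_left _ _; exact min_le_left _ _]
      _ ≤ f (a * x + b * y) := by simpa using hf.2 hx hy ha hb hab
  · calc a * min (f x) (g x) + b * min (f y) (g y)
        ≤ a * g x + b * g y := by
          gcongr <;> [exact min_le_right _ _; exact min_le_right _ _]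
      _ ≤ g (a * x + b * y) := by simpa using hg.2 hx hy ha hb hab

lemma my_concaveOn_sum {ι : Type*} (t : Finset ι) {s : Set ℝ} (hs : Convex ℝ s)
    {g : ι → ℝ → ℝ} (hg : ∀ i ∈ t, ConcaveOn ℝ s (g i)) :
    ConcaveOn ℝ s (fun p => ∑ i ∈ t, g i p) := by
  classical
  induction t using Finset.induction_on with
  | empty => exact ⟨hs, fun x hx y hy a b ha hb hab => by simp⟩
  | insert _ _ hnot ih =>
      rename_i i t'
      simp only [Finset.sum_insert hnot]
      exact (hg i (Finset.mem_insert_self i t')).add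
        (ih fun j hj => hg j (Finset.mem_insert_of_mem hj))

lemma my_concaveOn_const_mul {s : Set ℝ} {c : ℝ} (hc : 0 ≤ c) {f : ℝ → ℝ}
    (hf : ConcaveOn ℝ s f) : ConcaveOn ℝ s (fun p => c * f p) := by
  simpa [Pi.smul_def, smul_eq_mul] using hf.smul hc

lemma persp (ρ : ℝ) (hρ : ρ ∈ Set.Ioo (0:ℝ) 1) (L : ℝ) (hL : 0 < L)
    (V : ℝ → ℝ) (hV : ConcaveOn ℝ (Set.Icc (0:ℝ) 1) V) :
    ConcaveOn ℝ (Set.Icc (0:ℝ) 1)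
      (fun p => (pbar ρ p * L + (1 - pbar ρ p)) *
        V (pbar ρ p * L / (pbar ρ p * L + (1 - pbar ρ p)))) := by
  obtain ⟨hρ0, hρ1⟩ := hρ
  have hpbar : ∀ p ∈ Set.Icc (0:ℝ) 1, ρ ≤ pbar ρ p ∧ pbar ρ p ≤ 1 := by
    intro p hp
    obtain ⟨h0, h1⟩ := hp
    constructor <;> (unfold pbar; nlinarith)
  have hden : ∀ p ∈ Set.Icc (0:ℝ) 1, 0 < pbar ρ p * L + (1 - pbar ρ p) := by
    intro p hp
    obtain ⟨h1, h2⟩ := hpbar p hp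
    nlinarith
  have harg : ∀ p ∈ Set.Icc (0:ℝ) 1,
      pbar ρ p * L / (pbar ρ p * L + (1 - pbar ρ p)) ∈ Set.Icc (0:ℝ) 1 := by
    intro p hp
    obtain ⟨h1, h2⟩ := hpbar p hp
    constructor
    · exact div_nonneg (by nlinarith) (hden p hp).le
    · rw [div_le_one (hden p hp)]; nlinarith
  refine ⟨convex_Icc _ _, ?_⟩
  intro p hp q hq a b ha hb hab
  have hmem : a • p + b • q ∈ Set.Icc (0:ℝ) 1 := (convex_Icc (0:ℝ) 1) hp hq ha hb hab
  simp only [smul_eq_mul] at hmem ⊢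
  set dp := pbar ρ p * L + (1 - pbar ρ p) with hdp
  set dq := pbar ρ q * L + (1 - pbar ρ q) with hdq
  have hdpp : 0 < dp := hden p hp
  have hdqp : 0 < dq := hden q hq
  have hpaff : pbar ρ (a*p + b*q) = a * pbar ρ p + b * pbar ρ q := by
    unfold pbar; linear_combination (-ρ) * hab
  have hD : pbar ρ (a*p+b*q) * L + (1 - pbar ρ (a*p+b*q)) = a * dp + b * dq := by
    rw [hpaff, hdp, hdq]; linear_combination -hab
  have hDpos : 0 < a * dp + b * dq := hD ▸ hden _ hmem
  have hs : a * dp / (a*dp+b*dq) + b * dq / (a*dp+b*dq) = 1 := by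
    field_simp
  have hargeq : pbar ρ (a*p+b*q) * L / (pbar ρ (a*p+b*q) * L + (1 - pbar ρ (a*p+b*q)))
      = (a*dp/(a*dp+b*dq)) * (pbar ρ p * L / dp)
        + (b*dq/(a*dp+b*dq)) * (pbar ρ q * L / dq) := by
    rw [hD, hpaff]
    field_simp
  have hVineq := hV.2 (harg p hp) (harg q hq)
    (div_nonneg (mul_nonneg ha hdpp.le) hDpos.le)
    (div_nonneg (mul_nonneg hb hdqp.le) hDpos.le) hs
  simp only [smul_eq_mul] at hVineq
  rw [hargeq, hD]
  calc a * (dp * V (pbar ρ p * L / dp)) + b * (dq * V (pbar ρ q * L / dq))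
      = (a*dp+b*dq) * ((a*dp/(a*dp+b*dq)) * V (pbar ρ p * L / dp)
          + (b*dq/(a*dp+b*dq)) * V (pbar ρ q * L / dq)) := by
        field_simp
    _ ≤ (a*dp+b*dq) * V ((a*dp/(a*dp+b*dq)) * (pbar ρ p * L / dp)
          + (b*dq/(a*dp+b*dq)) * (pbar ρ q * L / dq)) :=
        mul_le_mul_of_nonneg_left hVineq hDpos.le

set_option maxHeartbeats 2000000 in
theorem stmt_14 {S : Type*} [Fintype S] [Nonempty S]
    (Q1 Q2 : S → S → ℝ)
    (hQ1pos : ∀ x x', 0 < Q1 x x') (hQ2pos : ∀ x x', 0 < Q2 x x')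
    (hQ1row : ∀ x, ∑ x', Q1 x x' = 1) (hQ2row : ∀ x, ∑ x', Q2 x x' = 1)
    (ρ : ℝ) (hρ : ρ ∈ Set.Ioo (0 : ℝ) 1)
    (lam : ℝ) (hlam : 0 < lam)
    (W : ℝ → S → ℝ)
    (hW : ∀ p ∈ Set.Icc (0 : ℝ) 1, ∀ x : S,
        Filter.Tendsto (fun k : ℕ => ((bell Q1 Q2 ρ lam)^[k] (psi S lam)) p x)
          Filter.atTop (nhds (W p x))) :
    ∀ x : S, ∃ p0 ∈ Set.Ioo (0 : ℝ) 1,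
      (lam * (1 - p0)
        = p0 + ∑ x' : S, pred Q1 Q2 ρ x' p0 x * W (post Q1 Q2 ρ x' x p0) x') ∧
      (∀ q ∈ Set.Ioo (0 : ℝ) 1,
        lam * (1 - q)
          = q + ∑ x' : S, pred Q1 Q2 ρ x' q x * W (post Q1 Q2 ρ x' x q) x' → q = p0) ∧
      (∀ p ∈ Set.Icc (0 : ℝ) 1, (W p x = lam * (1 - p) ↔ p0 ≤ p)) := by
  obtain ⟨hρ0, hρ1⟩ := hρ
  have hL : ∀ x x' : S, 0 < likeRatio Q1 Q2 x' x :=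
    fun x x' => div_pos (hQ2pos x x') (hQ1pos x x')
  have hpbar : ∀ p ∈ Set.Icc (0:ℝ) 1, ρ ≤ pbar ρ p ∧ pbar ρ p ≤ 1 := by
    intro p hp
    obtain ⟨h0, h1⟩ := hp
    constructor <;> (unfold pbar; nlinarith)
  have hden : ∀ (x' x : S), ∀ p ∈ Set.Icc (0:ℝ) 1,
      0 < pbar ρ p * likeRatio Q1 Q2 x' x + (1 - pbar ρ p) := by
    intro x' x p hp
    obtain ⟨h1, h2⟩ := hpbar p hp
    have := hL x x'
    nlinarith
  have hpostmem : ∀ (x' x : S), ∀ p ∈ Set.Icc (0:ℝ) 1,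
      post Q1 Q2 ρ x' x p ∈ Set.Icc (0:ℝ) 1 := by
    intro x' x p hp
    obtain ⟨h1, h2⟩ := hpbar p hp
    have hl := hL x x'
    unfold post
    constructor
    · exact div_nonneg (by nlinarith) (hden x' x p hp).le
    · rw [div_le_one (hden x' x p hp)]; nlinarith
  have hpred_eq : ∀ (x' x : S) (p : ℝ), pred Q1 Q2 ρ x' p x
      = Q1 x x' * (pbar ρ p * likeRatio Q1 Q2 x' x + (1 - pbar ρ p)) := by
    intro x' x p
    unfold pred likeRatio
    field_simp [(hQ1pos x x').ne']
    ring
  have hpred0 : ∀ (x' x : S), ∀ p ∈ Set.Icc (0:ℝ) 1, 0 ≤ pred Q1 Q2 ρ x' p x := by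
    intro x' x p hp
    rw [hpred_eq]
    exact mul_nonneg (hQ1pos x x').le (hden x' x p hp).le
  -- concavity propagation for the Bellman operator
  have hstep : ∀ (V : ℝ → S → ℝ), (∀ x', ConcaveOn ℝ (Set.Icc (0:ℝ) 1) (fun p => V p x')) →
      ∀ x, ConcaveOn ℝ (Set.Icc (0:ℝ) 1)
        (fun p => p + ∑ x' : S, pred Q1 Q2 ρ x' p x * V (post Q1 Q2 ρ x' x p) x') := by
    intro V hV x
    have hid : ConcaveOn ℝ (Set.Icc (0:ℝ) 1) (fun p : ℝ => p) :=
      ⟨convex_Icc _ _, fun u _ v _ a b _ _ hab => by simp [smul_eq_mul]⟩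
    refine hid.add (my_concaveOn_sum Finset.univ (convex_Icc _ _) ?_)
    intro x' _
    have heq : (fun p => pred Q1 Q2 ρ x' p x * V (post Q1 Q2 ρ x' x p) x')
        = fun p => Q1 x x' * ((pbar ρ p * likeRatio Q1 Q2 x' x + (1 - pbar ρ p)) *
            V (pbar ρ p * likeRatio Q1 Q2 x' x /
              (pbar ρ p * likeRatio Q1 Q2 x' x + (1 - pbar ρ p))) x') := by
      funext p
      rw [hpred_eq]
      unfold post
      ring
    rw [heq]
    exact my_concaveOn_const_mul (hQ1pos x x').le
      (persp ρ ⟨hρ0, hρ1⟩ _ (hL x x') (fun q => V q x') (hV x'))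
  -- concavity of the iterates
  have hconc_iter : ∀ (k : ℕ) (x : S), ConcaveOn ℝ (Set.Icc (0:ℝ) 1)
      (fun p => ((bell Q1 Q2 ρ lam)^[k] (psi S lam)) p x) := by
    intro k
    induction k with
    | zero =>
        intro x
        refine ⟨convex_Icc _ _, fun u _ v _ a b _ _ hab => ?_⟩
        simp only [Function.iterate_zero_apply, psi, smul_eq_mul]
        apply le_of_eq
        linear_combination lam * hab
    | succ k ih =>
        intro x
        simp only [Function.iterate_succ_apply']
        exact my_concaveOn_min (convex_Icc _ _)
          ⟨convex_Icc _ _, fun u _ v _ a b _ _ hab => by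
            simp only [smul_eq_mul]; apply le_of_eq; linear_combination lam * hab⟩
          (hstep _ (fun x' => ih x') x)
  -- nonnegativity of the iterates
  have hiter0 : ∀ (k : ℕ), ∀ p ∈ Set.Icc (0:ℝ) 1, ∀ x : S,
      0 ≤ ((bell Q1 Q2 ρ lam)^[k] (psi S lam)) p x := by
    intro k
    induction k with
    | zero =>
        intro p hp x
        simp only [Function.iterate_zero_apply, psi]
        nlinarith [hp.1, hp.2]
    | succ k ih =>
        intro p hp x
        simp only [Function.iterate_succ_apply']
        refine le_min (by nlinarith [hp.1, hp.2]) ?_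
        have : 0 ≤ ∑ x' : S, pred Q1 Q2 ρ x' p x *
            ((bell Q1 Q2 ρ lam)^[k] (psi S lam)) (post Q1 Q2 ρ x' x p) x' :=
          Finset.sum_nonneg fun x' _ =>
            mul_nonneg (hpred0 x' x p hp) (ih _ (hpostmem x' x p hp) x')
        linarith [hp.1]
  -- W is concave
  have hWconc : ∀ x : S, ConcaveOn ℝ (Set.Icc (0:ℝ) 1) (fun p => W p x) := by
    intro x
    refine ⟨convex_Icc _ _, ?_⟩
    intro p hp q hq a b ha hb hab
    have hmem : a • p + b • q ∈ Set.Icc (0:ℝ) 1 := (convex_Icc (0:ℝ) 1) hp hq ha hb hab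
    refine le_of_tendsto_of_tendsto'
      (((hW p hp x).const_mul a).add ((hW q hq x).const_mul b))
      (hW _ hmem x) (fun k => ?_)
    have := (hconc_iter k x).2 hp hq ha hb hab
    simpa [smul_eq_mul] using this
  -- W is nonnegative
  have hWnonneg : ∀ p ∈ Set.Icc (0:ℝ) 1, ∀ x : S, 0 ≤ W p x :=
    fun p hp x => ge_of_tendsto' (hW p hp x) (fun k => hiter0 k p hp x)
  -- fixed point equation
  have hfix : ∀ p ∈ Set.Icc (0:ℝ) 1, ∀ x : S,
      W p x = min (lam * (1 - p))
        (p + ∑ x' : S, pred Q1 Q2 ρ x' p x * W (post Q1 Q2 ρ x' x p) x') := by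
    intro p hp x
    have h1 : Tendsto (fun k : ℕ => ((bell Q1 Q2 ρ lam)^[k+1] (psi S lam)) p x)
        atTop (nhds (W p x)) := by
      have := (hW p hp x).comp (tendsto_add_atTop_nat 1)
      exact this
    have heq : (fun k : ℕ => ((bell Q1 Q2 ρ lam)^[k+1] (psi S lam)) p x)
        = fun k : ℕ => min (lam * (1 - p))
            (p + ∑ x' : S, pred Q1 Q2 ρ x' p x *
              ((bell Q1 Q2 ρ lam)^[k] (psi S lam)) (post Q1 Q2 ρ x' x p) x') := by
      funext k
      rw [Function.iterate_succ_apply']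
      rfl
    rw [heq] at h1
    have h2 : Tendsto (fun k : ℕ => min (lam * (1 - p))
        (p + ∑ x' : S, pred Q1 Q2 ρ x' p x *
          ((bell Q1 Q2 ρ lam)^[k] (psi S lam)) (post Q1 Q2 ρ x' x p) x'))
        atTop (nhds (min (lam * (1 - p))
          (p + ∑ x' : S, pred Q1 Q2 ρ x' p x * W (post Q1 Q2 ρ x' x p) x'))) := by
      refine Tendsto.min tendsto_const_nhds (Tendsto.const_add p ?_)
      exact tendsto_finset_sum _ fun x' _ =>
        ((hW _ (hpostmem x' x p hp) x').const_mul _)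
    exact tendsto_nhds_unique h1 h2
  -- W p x ≤ lam (1-p)
  have hWle : ∀ p ∈ Set.Icc (0:ℝ) 1, ∀ x : S, W p x ≤ lam * (1 - p) := by
    intro p hp x
    rw [hfix p hp x]
    exact min_le_left _ _
  -- main argument
  intro x
  obtain ⟨G, hGdef⟩ : ∃ G : ℝ → ℝ, ∀ p, G p
      = ∑ x' : S, pred Q1 Q2 ρ x' p x * W (post Q1 Q2 ρ x' x p) x' := ⟨_, fun p => rfl⟩
  obtain ⟨D, hDdef⟩ : ∃ D : ℝ → ℝ, ∀ p, D p = lam * (1 - p) - p - G p := ⟨_, fun p => rfl⟩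
  have hGconc : ConcaveOn ℝ (Set.Icc (0:ℝ) 1) G := by
    have := hstep W hWconc x
    have h2 : ConcaveOn ℝ (Set.Icc (0:ℝ) 1)
        (fun p : ℝ => (-1) * p + (p + ∑ x' : S, pred Q1 Q2 ρ x' p x * W (post Q1 Q2 ρ x' x p) x')) := by
      refine ConcaveOn.add ⟨convex_Icc _ _, fun u _ v _ a b _ _ hab => ?_⟩ this
      simp only [smul_eq_mul]
      apply le_of_eq
      ring
    have heq : G = fun p : ℝ => (-1) * p + (p + ∑ x' : S, pred Q1 Q2 ρ x' p x * W (post Q1 Q2 ρ x' x p) x') := by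
      funext p
      rw [hGdef]
      ring
    rw [heq]
    exact h2
  have hDconv : ConvexOn ℝ (Set.Icc (0:ℝ) 1) D := by
    refine ⟨convex_Icc _ _, ?_⟩
    intro p hp q hq a b ha hb hab
    have hG := hGconc.2 hp hq ha hb hab
    simp only [smul_eq_mul] at hG ⊢
    rw [hDdef, hDdef, hDdef]
    have : lam * (1 - (a*p + b*q)) - (a*p + b*q)
        = a * (lam * (1 - p) - p) + b * (lam * (1 - q) - q) := by
      linear_combination (-lam) * hab
    nlinarith [hG]
  have hGnonneg : ∀ p ∈ Set.Icc (0:ℝ) 1, 0 ≤ G p := by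
    intro p hp
    rw [hGdef]
    exact Finset.sum_nonneg fun x' _ =>
      mul_nonneg (hpred0 x' x p hp) (hWnonneg _ (hpostmem x' x p hp) x')
  have hGle : ∀ p ∈ Set.Icc (0:ℝ) 1, G p ≤ lam * (1 - ρ) * (1 - p) := by
    intro p hp
    have hterm : ∀ x' : S, pred Q1 Q2 ρ x' p x * W (post Q1 Q2 ρ x' x p) x'
        ≤ lam * (1 - pbar ρ p) * Q1 x x' := by
      intro x'
      have h1 : W (post Q1 Q2 ρ x' x p) x' ≤ lam * (1 - post Q1 Q2 ρ x' x p) :=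
        hWle _ (hpostmem x' x p hp) x'
      have h2 : pred Q1 Q2 ρ x' p x * (lam * (1 - post Q1 Q2 ρ x' x p))
          = lam * (1 - pbar ρ p) * Q1 x x' := by
        rw [hpred_eq]
        unfold post
        field_simp [(hden x' x p hp).ne']
        ring
      calc pred Q1 Q2 ρ x' p x * W (post Q1 Q2 ρ x' x p) x'
          ≤ pred Q1 Q2 ρ x' p x * (lam * (1 - post Q1 Q2 ρ x' x p)) :=
            mul_le_mul_of_nonneg_left h1 (hpred0 x' x p hp)
        _ = lam * (1 - pbar ρ p) * Q1 x x' := h2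
    have hsum : G p ≤ ∑ x' : S, lam * (1 - pbar ρ p) * Q1 x x' := by
      rw [hGdef]
      exact Finset.sum_le_sum fun x' _ => hterm x'
    have : ∑ x' : S, lam * (1 - pbar ρ p) * Q1 x x' = lam * (1 - pbar ρ p) := by
      rw [← Finset.mul_sum, hQ1row]
      ring
    rw [this] at hsum
    have : lam * (1 - pbar ρ p) = lam * (1 - ρ) * (1 - p) := by
      unfold pbar
      ring
    linarith [hsum, this.le, this.ge]
  have hDlow : ∀ p ∈ Set.Icc (0:ℝ) 1, lam * ρ * (1 - p) - p ≤ D p := by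
    intro p hp
    have := hGle p hp
    rw [hDdef]
    nlinarith
  have hD1 : D 1 = -1 := by
    have h1 : G 1 ≤ 0 := by
      have := hGle 1 (by constructor <;> norm_num)
      nlinarith
    have h2 : 0 ≤ G 1 := hGnonneg 1 (by constructor <;> norm_num)
    rw [hDdef]
    nlinarith
  have hD0le : D 0 ≤ lam := by
    have := hGnonneg 0 (by constructor <;> norm_num)
    rw [hDdef]
    nlinarith
  set a : ℝ := lam * ρ / (2 * (1 + lam * ρ)) with ha_def
  set b : ℝ := (lam / (1 + lam) + 1) / 2 with hb_def
  have hlamρ : 0 < lam * ρ := mul_pos hlam hρ0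
  have ha0 : 0 < a := by positivity
  have ha1 : a < lam * ρ / (1 + lam * ρ) := by
    rw [ha_def, div_lt_div_iff₀ (by positivity) (by positivity)]
    nlinarith
  have ha1' : a < 1 := by
    have : lam * ρ / (1 + lam * ρ) < 1 := by
      rw [div_lt_one (by positivity)]
      linarith
    linarith
  have hb1 : b < 1 := by
    rw [hb_def]
    have : lam / (1 + lam) < 1 := by
      rw [div_lt_one (by positivity)]
      linarith
    linarith
  have hb0 : lam / (1 + lam) < b := by
    rw [hb_def]
    have : lam / (1 + lam) < 1 := by
      rw [div_lt_one (by positivity)]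
      linarith
    linarith
  have hb0' : 0 < b := by
    have : 0 ≤ lam / (1 + lam) := by positivity
    linarith
  have hab : a ≤ b := by
    have h1 : lam * ρ / (1 + lam * ρ) ≤ lam / (1 + lam) := by
      rw [div_le_div_iff₀ (by positivity) (by positivity)]
      nlinarith
    linarith
  have hamem : a ∈ Set.Icc (0:ℝ) 1 := ⟨ha0.le, ha1'.le⟩
  have hbmem : b ∈ Set.Icc (0:ℝ) 1 := ⟨hb0'.le, hb1.le⟩
  have hDa : 0 < D a := by
    have h1 := hDlow a hamem
    have h2 : lam * ρ * (1 - a) - a = lam * ρ / 2 := by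
      rw [ha_def]
      field_simp
      ring
    nlinarith
  have hDb : D b < 0 := by
    have hcvx := hDconv.2 (Set.mem_Icc.mpr ⟨le_refl 0, by norm_num⟩)
      (Set.mem_Icc.mpr ⟨by norm_num, le_refl 1⟩)
      (by linarith : (0:ℝ) ≤ 1 - b) hb0'.le (by ring)
    simp only [smul_eq_mul, mul_zero, mul_one, zero_add] at hcvx
    have hpt : (1 - b) * 0 + b * 1 = b := by ring
    have hcvx' : D b ≤ (1 - b) * D 0 + b * D 1 := by
      calc D b = D ((1-b) * 0 + b * 1) := by norm_num
        _ ≤ (1 - b) * D 0 + b * D 1 := by simpa using hcvx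
    rw [hD1] at hcvx'
    have : (1 - b) * D 0 ≤ (1 - b) * lam :=
      mul_le_mul_of_nonneg_left hD0le (by linarith)
    have hblam : (1 - b) * lam < b := by
      have := hb0
      rw [div_lt_iff₀ (by positivity)] at this
      nlinarith
    nlinarith
  -- continuity and IVT
  have hDcont : ContinuousOn D (Set.Icc a b) := by
    have h1 : ContinuousOn D (interior (Set.Icc (0:ℝ) 1)) := hDconv.continuousOn_interior
    rw [interior_Icc] at h1
    exact h1.mono (fun t ht => ⟨lt_of_lt_of_le ha0 ht.1, lt_of_le_of_lt ht.2 hb1⟩)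
  obtain ⟨p0, hp0mem, hDp0⟩ := intermediate_value_Icc' hab hDcont ⟨hDb.le, hDa.le⟩
  have hp00 : 0 < p0 := lt_of_lt_of_le ha0 hp0mem.1
  have hp01 : p0 < 1 := lt_of_le_of_lt hp0mem.2 hb1
  have hp0Icc : p0 ∈ Set.Icc (0:ℝ) 1 := ⟨hp00.le, hp01.le⟩
  -- convexity threshold lemmas
  have key_neg : ∀ q ∈ Set.Icc (0:ℝ) 1, p0 < q → D q < 0 := by
    intro q hq hlt
    set t : ℝ := (q - p0) / (1 - p0) with ht_def
    have h1p0 : 0 < 1 - p0 := by linarith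
    have ht0 : 0 < t := div_pos (by linarith) h1p0
    have ht1 : t ≤ 1 := by
      rw [ht_def, div_le_one h1p0]
      linarith [hq.2]
    have hcvx := hDconv.2 hp0Icc (Set.mem_Icc.mpr ⟨by norm_num, le_refl 1⟩)
      (by linarith : (0:ℝ) ≤ 1 - t) ht0.le (by ring)
    simp only [smul_eq_mul, mul_one] at hcvx
    have hpt : (1 - t) * p0 + t = q := by
      rw [ht_def]
      field_simp
      ring
    rw [hpt, hDp0, hD1] at hcvx
    nlinarith
  have key_pos : ∀ q ∈ Set.Icc (0:ℝ) 1, q < p0 → 0 < D q := by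
    intro q hq hlt
    set t : ℝ := (p0 - q) / (1 - q) with ht_def
    have h1q : 0 < 1 - q := by linarith
    have ht0 : 0 < t := div_pos (by linarith) h1q
    have ht1 : t < 1 := by
      rw [ht_def, div_lt_one h1q]
      linarith
    have hcvx := hDconv.2 hq (Set.mem_Icc.mpr ⟨by norm_num, le_refl 1⟩)
      (by linarith : (0:ℝ) ≤ 1 - t) ht0.le (by ring)
    simp only [smul_eq_mul, mul_one] at hcvx
    have hpt : (1 - t) * q + t = p0 := by
      rw [ht_def]
      field_simp
      ring
    rw [hpt, hDp0, hD1] at hcvx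
    nlinarith
  -- assemble
  refine ⟨p0, ⟨hp00, hp01⟩, ?_, ?_, ?_⟩
  · have := hDp0
    rw [hDdef, hGdef] at this
    linarith
  · intro q hq heq
    have hDq : D q = 0 := by
      rw [hDdef, hGdef]
      linarith
    rcases lt_trichotomy q p0 with h | h | h
    · exact absurd hDq (by have := key_pos q ⟨hq.1.le, hq.2.le⟩ h; linarith)
    · exact h
    · exact absurd hDq (by have := key_neg q ⟨hq.1.le, hq.2.le⟩ h; linarith)
  · intro p hp
    have hfixp := hfix p hp x
    constructor
    · intro hWeq
      by_contra hcon
      push_neg at hcon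
      have hDpos := key_pos p hp hcon
      rw [hDdef, hGdef] at hDpos
      have hmin : min (lam * (1 - p))
          (p + ∑ x' : S, pred Q1 Q2 ρ x' p x * W (post Q1 Q2 ρ x' x p) x') = lam * (1 - p) := by
        rw [← hfixp, hWeq]
      have := min_eq_left_iff.mp hmin
      linarith
    · intro hge
      have hDle : D p ≤ 0 := by
        rcases eq_or_lt_of_le hge with h | h
        · rw [← h, hDp0]
        · exact (key_neg p hp h).le
      rw [hDdef, hGdef] at hDle
      rw [hfixp]
      exact min_eq_left (by linarith)
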